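/- For every integer n ≥ 1 and every i ∈ ℕ: c i + d i = 2·(a i + b i); c i − d i = 2n·(b i); (c i)·(d i) = 2·(a i)·(b i) + 1; a i = c i − (n+1)·(b i); and gcd(c i, d i) = 1. (These identities express that the class A_{i,n} = (a i, b i; W(c i, d i)) has Chern number 1 and self-intersection −1, i.e. is quasi-perfect, with coprime weight parameters.) -/

import Mathlib

/-- The solution of x 0 = x0, x 1 = x1, x (i+2) = 2n·x (i+1) − x i. -/
def rec2 (n : ℕ) (x0 x1 : ℤ) : ℕ → ℤ
  | 0 => x0
  | 1 => x1
  | i + 2 => 2 * n * rec2 n x0 x1 (i + 1) - rec2 n x0 x1 i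

/-- a i : a 0 = 1, a 1 = n. -/
def sa (n : ℕ) : ℕ → ℤ := rec2 n 1 n
/-- b i : b 0 = 0, b 1 = 1. -/
def sb (n : ℕ) : ℕ → ℤ := rec2 n 0 1
/-- c i : c 0 = 1, c 1 = 2n+1. -/
def sc (n : ℕ) : ℕ → ℤ := rec2 n 1 (2 * n + 1)
/-- d i : d 0 = 1, d 1 = 1. -/
def sd (n : ℕ) : ℕ → ℤ := rec2 n 1 1

lemma rec2_step (n : ℕ) (x0 x1 : ℤ) (i : ℕ) :
    rec2 n x0 x1 (i + 2) = 2 * n * rec2 n x0 x1 (i + 1) - rec2 n x0 x1 i := rfl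

lemma hc (n i : ℕ) : sc n i = sa n i + (n + 1) * sb n i := by
  induction i using Nat.twoStepInduction with
  | zero => simp [sa, sb, sc, rec2]
  | one => simp [sa, sb, sc, rec2]; ring
  | more i ih1 ih2 =>
    have e1 : sc n (i+2) = 2*n*sc n (i+1) - sc n i := rec2_step n 1 (2*n+1) i
    have e2 : sa n (i+2) = 2*n*sa n (i+1) - sa n i := rec2_step n 1 n i
    have e3 : sb n (i+2) = 2*n*sb n (i+1) - sb n i := rec2_step n 0 1 i
    rw [e1, e2, e3]; linear_combination 2*n*ih2 - ih1

lemma hd (n i : ℕ) : sd n i = sa n i + (1 - n) * sb n i := by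
  induction i using Nat.twoStepInduction with
  | zero => simp [sa, sb, sd, rec2]
  | one => simp [sa, sb, sd, rec2]
  | more i ih1 ih2 =>
    have e1 : sd n (i+2) = 2*n*sd n (i+1) - sd n i := rec2_step n 1 1 i
    have e2 : sa n (i+2) = 2*n*sa n (i+1) - sa n i := rec2_step n 1 n i
    have e3 : sb n (i+2) = 2*n*sb n (i+1) - sb n i := rec2_step n 0 1 i
    rw [e1, e2, e3]; linear_combination 2*n*ih2 - ih1

lemma hstep (n i : ℕ) : sa n (i + 1) = n * sa n i + ((n:ℤ) ^ 2 - 1) * sb n i ∧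
    sb n (i + 1) = sa n i + n * sb n i := by
  induction i with
  | zero => constructor <;> (simp [sa, sb, rec2])
  | succ i ih =>
    obtain ⟨h1, h2⟩ := ih
    have e2 : sa n (i+2) = 2*n*sa n (i+1) - sa n i := rec2_step n 1 n i
    have e3 : sb n (i+2) = 2*n*sb n (i+1) - sb n i := rec2_step n 0 1 i
    constructor
    · rw [e2]; linear_combination n*h1 - ((n:ℤ)^2-1)*h2
    · rw [e3]; linear_combination n*h2 - h1

lemma pell (n i : ℕ) : sa n i ^ 2 - ((n:ℤ) ^ 2 - 1) * sb n i ^ 2 = 1 := by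
  induction i with
  | zero => simp [sa, sb, rec2]
  | succ i ih =>
    obtain ⟨h1, h2⟩ := hstep n i
    rw [h1, h2]; linear_combination ih

lemma wron (n i : ℕ) : sc n (i+1) * sd n i - sc n i * sd n (i+1) = 2 * n := by
  induction i with
  | zero => show (2*(n:ℤ)+1) * 1 - 1 * 1 = 2*n; ring
  | succ i ih =>
    have h1 : sc n (i+2) = 2*n*sc n (i+1) - sc n i := rec2_step n 1 (2*n+1) i
    have h2 : sd n (i+2) = 2*n*sd n (i+1) - sd n i := rec2_step n 1 1 i
    rw [h1, h2]; linear_combination ih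

lemma cmod (n i : ℕ) : (2*(n:ℤ)) ∣ (sc n i - 1) ∨ (2*(n:ℤ)) ∣ (sc n i + 1) := by
  induction i using Nat.twoStepInduction with
  | zero => left; simp [sc, rec2]
  | one => left; simp [sc, rec2]
  | more i ih1 ih2 =>
    have h1 : sc n (i+2) = 2*n*sc n (i+1) - sc n i := rec2_step n 1 (2*n+1) i
    rcases ih1 with h | h
    · right; rw [h1]
      obtain ⟨k, hk⟩ := h
      exact ⟨sc n (i+1) - k, by linarith [hk]⟩
    · left; rw [h1]
      obtain ⟨k, hk⟩ := h
      exact ⟨sc n (i+1) - k, by linarith [hk]⟩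

theorem stmt_18 (n : ℕ) (hn : 1 ≤ n) (i : ℕ) :
    sc n i + sd n i = 2 * (sa n i + sb n i) ∧
    sc n i - sd n i = 2 * n * sb n i ∧
    sc n i * sd n i = 2 * sa n i * sb n i + 1 ∧
    sa n i = sc n i - (n + 1) * sb n i ∧
    Int.gcd (sc n i) (sd n i) = 1 := by
  have hc := hc n i
  have hd := hd n i
  have hp := pell n i
  refine ⟨by rw [hc, hd]; ring, by rw [hc, hd]; ring,
    by rw [hc, hd]; linear_combination hp, by rw [hc]; ring, ?_⟩
  have hw := wron n i
  set g : ℤ := (Int.gcd (sc n i) (sd n i) : ℤ) with hg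
  have hgc : g ∣ sc n i := Int.gcd_dvd_left _ _
  have hgd : g ∣ sd n i := Int.gcd_dvd_right _ _
  have hg2n : g ∣ 2 * n := by
    rw [← hw]
    exact dvd_sub (Dvd.dvd.mul_left hgd _) (Dvd.dvd.mul_right hgc _)
  have hg1 : g ∣ 1 := by
    rcases cmod n i with h | h
    · have h' : g ∣ sc n i - 1 := hg2n.trans h
      have := dvd_sub hgc h'
      simpa using this
    · have h' : g ∣ sc n i + 1 := hg2n.trans h
      have := dvd_sub h' hgc
      simpa using this
  have h1 : (Int.gcd (sc n i) (sd n i) : ℤ) ∣ (1 : ℤ) := hg1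
  exact Nat.dvd_one.mp (by exact_mod_cast h1)
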